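/- arXiv:math/0504034 — 3 statements merged into one kernel-verified Lean document; each statement's English description precedes it below -/
import Mathlib

section
/- For any positive real numbers m and p, the limit as n → ∞ of the ratio (∑_{j=1}^n j^m/(1+j^{m+1})) / (∑_{j=1}^n j^p/(1+j^{p+1})) equals 1. -/
open Filter Finset

lemma H_tendsto :
    Tendsto (fun n : ℕ => ∑ j ∈ Finset.Icc 1 n, 1/(j:ℝ)) atTop atTop := by
  have h := Real.tendsto_sum_range_one_div_nat_succ_atTop
  refine h.congr fun n => ?_
  rw [← Finset.Ico_add_one_right_eq_Icc, Finset.sum_Ico_eq_sum_range]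
  refine Finset.sum_congr (by simp) fun i _ => ?_
  push_cast
  ring_nf

lemma term_eq (m : ℝ) (j : ℕ) (hj : 1 ≤ j) :
    1/(j:ℝ) - (j:ℝ)^m/(1 + (j:ℝ)^(m+1)) = 1/((j:ℝ) * (1 + (j:ℝ)^(m+1))) := by
  have hj0 : (0:ℝ) < j := by exact_mod_cast Nat.lt_of_lt_of_le Nat.zero_lt_one hj
  have h1 : (j:ℝ)^(m+1) = (j:ℝ)^m * j := by
    rw [Real.rpow_add hj0, Real.rpow_one]
  have h2 : (0:ℝ) < 1 + (j:ℝ)^(m+1) := by positivity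
  rw [div_sub_div _ _ (ne_of_gt hj0) (ne_of_gt h2)]
  congr 1
  rw [h1]; ring

lemma term_le (m : ℝ) (hm : 0 < m) (j : ℕ) (hj : 1 ≤ j) :
    1/((j:ℝ) * (1 + (j:ℝ)^(m+1))) ≤ 1/(j:ℝ)^2 := by
  have hj1 : (1:ℝ) ≤ j := by exact_mod_cast hj
  have hj0 : (0:ℝ) < j := by linarith
  apply one_div_le_one_div_of_le (by positivity)
  have h1 : (j:ℝ) ≤ (j:ℝ)^(m+1) := by
    nth_rewrite 1 [← Real.rpow_one (j:ℝ)]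
    exact Real.rpow_le_rpow_of_exponent_le hj1 (by linarith)
  calc (j:ℝ)^2 = (j:ℝ) * (j:ℝ) := sq (j:ℝ) ▸ rfl
    _ ≤ (j:ℝ) * (1 + (j:ℝ)^(m+1)) := by nlinarith

lemma part_to_one (m : ℝ) (hm : 0 < m) :
    Tendsto (fun n : ℕ => (∑ j ∈ Finset.Icc 1 n, (j:ℝ)^m/(1+(j:ℝ)^(m+1))) /
      (∑ j ∈ Finset.Icc 1 n, 1/(j:ℝ))) atTop (nhds 1) := by
  set H : ℕ → ℝ := fun n => ∑ j ∈ Finset.Icc 1 n, 1/(j:ℝ) with hH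
  set G : ℕ → ℝ := fun n => ∑ j ∈ Finset.Icc 1 n, 1/((j:ℝ) * (1 + (j:ℝ)^(m+1))) with hGdef
  have hsum : Summable (fun i : ℕ => 1/(i:ℝ)^2) :=
    Real.summable_one_div_nat_pow.mpr one_lt_two
  set C : ℝ := ∑' i : ℕ, 1/(i:ℝ)^2 with hC
  have hGnonneg : ∀ n, 0 ≤ G n := fun n =>
    Finset.sum_nonneg fun j hj => by positivity
  have hGle : ∀ n, G n ≤ C := by
    intro n
    calc G n ≤ ∑ j ∈ Finset.Icc 1 n, 1/(j:ℝ)^2 := by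
          apply Finset.sum_le_sum
          intro j hj
          exact term_le m hm j (Finset.mem_Icc.mp hj).1
      _ ≤ C := Summable.sum_le_tsum _ (fun i _ => by positivity) hsum
  have hHnonneg : ∀ n, 0 ≤ H n := fun n => Finset.sum_nonneg fun j _ => by positivity
  have hGH : Tendsto (fun n => G n / H n) atTop (nhds 0) := by
    refine squeeze_zero (fun n => div_nonneg (hGnonneg n) (hHnonneg n))
      (fun n => div_le_div_of_nonneg_right (hGle n) (hHnonneg n))
      (tendsto_const_nhds.div_atTop H_tendsto)
  have key : Tendsto (fun n => 1 - G n / H n) atTop (nhds 1) := by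
    simpa using tendsto_const_nhds.sub hGH
  refine key.congr' ?_
  filter_upwards [eventually_ge_atTop 1] with n hn
  have hHpos : 0 < H n := by
    refine Finset.sum_pos (fun j hj => ?_) ⟨1, by simpa using hn⟩
    have : 1 ≤ j := (Finset.mem_Icc.mp hj).1
    have : (0:ℝ) < j := by exact_mod_cast this
    positivity
  have hsub : H n - G n = ∑ j ∈ Finset.Icc 1 n, (j:ℝ)^m/(1+(j:ℝ)^(m+1)) := by
    rw [hH, hGdef, ← Finset.sum_sub_distrib]
    refine Finset.sum_congr rfl fun j hj => ?_
    have h := term_eq m j (Finset.mem_Icc.mp hj).1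
    linarith
  rw [ ← hsub, sub_div, div_self (ne_of_gt hHpos)]

theorem example_one (m p : ℝ) (hm : 0 < m) (hp : 0 < p) :
    Tendsto (fun n : ℕ =>
      (∑ j ∈ Finset.Icc 1 n, (j : ℝ) ^ m / (1 + (j : ℝ) ^ (m + 1))) /
      (∑ j ∈ Finset.Icc 1 n, (j : ℝ) ^ p / (1 + (j : ℝ) ^ (p + 1))))
      atTop (nhds 1) := by
  have h := (part_to_one m hm).div (part_to_one p hp) one_ne_zero
  rw [div_one] at h
  refine h.congr' ?_
  filter_upwards [eventually_ge_atTop 1] with n hn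
  have hHpos : 0 < ∑ j ∈ Finset.Icc 1 n, 1/(j:ℝ) := by
    refine Finset.sum_pos (fun j hj => ?_) ⟨1, by simpa using hn⟩
    have h1 : 1 ≤ j := (Finset.mem_Icc.mp hj).1
    have : (0:ℝ) < j := by exact_mod_cast h1
    positivity
  simp only [Pi.div_apply]
  rw [div_div_div_comm, div_self (ne_of_gt hHpos), div_one]
end

section
/- Let (a_n) and (b_n) be real sequences with 0 < a_n < 1 for all n, b_n ≥ 0 for all n, b_{n-1}/a_n → 0 as n → ∞, and ∑_{n=1}^∞ a_n = ∞. Then ∑_{k=1}^{n-1} b_k ∏_{j=k+1}^n (1 - a_j) → 0 as n → ∞. -/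
open Filter

theorem conv_term_tendsto_zero (a b : ℕ → ℝ)
    (ha : ∀ n, 0 < a n ∧ a n < 1)
    (hb : ∀ n, 0 ≤ b n)
    (hba : Tendsto (fun n => b (n - 1) / a n) atTop (nhds 0))
    (hdiv : Tendsto (fun n => ∑ j ∈ Finset.Icc 1 n, a j) atTop atTop) :
    Tendsto (fun n => ∑ k ∈ Finset.Icc 1 (n - 1),
      b k * ∏ j ∈ Finset.Icc (k + 1) n, (1 - a j)) atTop (nhds 0) := by
  have hfac_nonneg : ∀ j : ℕ, (0:ℝ) ≤ 1 - a j := fun j => by linarith [(ha j).2]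
  have hprod_nonneg : ∀ m n : ℕ, 0 ≤ ∏ j ∈ Finset.Ioc m n, (1 - a j) :=
    fun m n => Finset.prod_nonneg fun j _ => hfac_nonneg j
  have hprod_le_one : ∀ m n : ℕ, ∏ j ∈ Finset.Ioc m n, (1 - a j) ≤ 1 :=
    fun m n => Finset.prod_le_one (fun j _ => hfac_nonneg j)
      (fun j _ => by linarith [(ha j).1])
  -- the trailing product tends to 0
  have hQ : ∀ N : ℕ, Tendsto (fun n => ∏ j ∈ Finset.Ioc N n, (1 - a j)) atTop (nhds 0) := by
    intro N
    have hs : Tendsto (fun n => ∑ j ∈ Finset.Ioc N n, a j) atTop atTop := by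
      have h1 : Tendsto (fun n => (∑ j ∈ Finset.Icc 1 n, a j) + -(∑ j ∈ Finset.Icc 1 N, a j))
          atTop atTop := tendsto_atTop_add_const_right _ _ hdiv
      refine h1.congr' ?_
      filter_upwards [eventually_ge_atTop N] with n hn
      have : Finset.Icc 1 n = Finset.Ioc 0 n := Finset.Icc_add_one_left_eq_Ioc 0 n
      have h2 : Finset.Icc 1 N = Finset.Ioc 0 N := Finset.Icc_add_one_left_eq_Ioc 0 N
      rw [this, h2, ← Finset.sum_Ioc_consecutive (fun j => a j) (Nat.zero_le N) hn]
      ring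
    have hexp : Tendsto (fun n => Real.exp (-(∑ j ∈ Finset.Ioc N n, a j))) atTop (nhds 0) :=
      Real.tendsto_exp_atBot.comp (tendsto_neg_atBot_iff.mpr hs)
    refine squeeze_zero' (Eventually.of_forall fun n => hprod_nonneg N n)
      (Eventually.of_forall fun n => ?_) hexp
    calc ∏ j ∈ Finset.Ioc N n, (1 - a j)
        ≤ ∏ j ∈ Finset.Ioc N n, Real.exp (-a j) := by
          refine Finset.prod_le_prod (fun j _ => hfac_nonneg j) (fun j _ => ?_)
          have := Real.add_one_le_exp (-a j)
          linarith
      _ = Real.exp (∑ j ∈ Finset.Ioc N n, (-a j)) := (Real.exp_sum _ _).symm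
      _ = Real.exp (-(∑ j ∈ Finset.Ioc N n, a j)) := by rw [Finset.sum_neg_distrib]
  -- main argument
  rw [Metric.tendsto_atTop]
  intro ε hε
  -- choose M so that b k < (ε/2) * a (k+1) for k ≥ M
  obtain ⟨M, hM⟩ := (Metric.tendsto_atTop.mp hba) (ε / 2) (by linarith)
  have hsmall : ∀ k, M ≤ k → b k < ε / 2 * a (k + 1) := by
    intro k hk
    have := hM (k + 1) (le_trans hk (Nat.le_succ k))
    simp only [Nat.add_sub_cancel, Real.dist_eq, sub_zero] at this
    have hpos := (ha (k + 1)).1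
    have habs : b k / a (k + 1) < ε / 2 := lt_of_abs_lt this
    calc b k = b k / a (k + 1) * a (k + 1) := by field_simp
      _ < ε / 2 * a (k + 1) := by
          exact mul_lt_mul_of_pos_right habs hpos
  set C : ℝ := ∑ k ∈ Finset.Ioc 0 M, b k with hC
  have hC0 : 0 ≤ C := Finset.sum_nonneg fun k _ => hb k
  obtain ⟨M2, hM2⟩ := (Metric.tendsto_atTop.mp (hQ M)) (ε / (2 * (C + 1)))
    (by positivity)
  refine ⟨max (M + 1) M2, fun n hn => ?_⟩
  have hnM : M + 1 ≤ n := le_trans (le_max_left _ _) hn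
  have hnM2 : M2 ≤ n := le_trans (le_max_right _ _) hn
  have hn1 : 1 ≤ n := le_trans (Nat.succ_le_succ (Nat.zero_le M)) hnM
  have hMn1 : M ≤ n - 1 := Nat.le_sub_one_of_lt hnM
  -- rewrite intervals as Ioc
  have hicc : ∀ m k : ℕ, Finset.Icc (m + 1) k = Finset.Ioc m k := fun m k => Finset.Icc_add_one_left_eq_Ioc m k
  set f : ℕ → ℝ := fun k => ∏ j ∈ Finset.Ioc k n, (1 - a j) with hf
  have hrec : ∀ k, k < n → f k = (1 - a (k + 1)) * f (k + 1) := by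
    intro k hk
    rw [hf]
    simp only
    rw [← Finset.prod_Ioc_consecutive (fun j => (1 - a j)) (Nat.le_succ k) hk,
      Nat.Ioc_succ_singleton, Finset.prod_singleton]
  have hfmono : ∀ k, k < n → f k ≤ f (k + 1) := by
    intro k hk
    rw [hrec k hk]
    have h1 := hprod_nonneg (k + 1) n
    nlinarith [(ha (k + 1)).1, (ha (k + 1)).2]
  have key : ∀ k, k < n → b k * f k ≤ b k * f (k + 1) := by
    intro k hk
    exact mul_le_mul_of_nonneg_left (hfmono k hk) (hb k)
  -- split the sum
  have hsplit : Finset.Ioc 0 (n - 1) = Finset.Ioc 0 M ∪ Finset.Ioc M (n - 1) :=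
    (Finset.Ioc_union_Ioc_eq_Ioc (Nat.zero_le M) hMn1).symm
  have hdisj : Disjoint (Finset.Ioc 0 M) (Finset.Ioc M (n - 1)) := by
    rw [Finset.disjoint_left]
    intro x hx hx'
    rw [Finset.mem_Ioc] at hx hx'
    omega
  have hsum : (∑ k ∈ Finset.Icc 1 (n - 1), b k * ∏ j ∈ Finset.Icc (k + 1) n, (1 - a j))
      = (∑ k ∈ Finset.Ioc 0 M, b k * f k) + ∑ k ∈ Finset.Ioc M (n - 1), b k * f k := by
    simp_rw [hicc]
    rw [hsplit, Finset.sum_union hdisj]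
  -- head bound
  have hQn : f M < ε / (2 * (C + 1)) := by
    have := hM2 n hnM2
    rw [Real.dist_eq, sub_zero] at this
    exact lt_of_abs_lt this
  have hhead : (∑ k ∈ Finset.Ioc 0 M, b k * f k) < ε / 2 := by
    have hterm : ∀ k ∈ Finset.Ioc 0 M, b k * f k ≤ b k * f M := by
      intro k hk
      rw [Finset.mem_Ioc] at hk
      have hkn : M ≤ n := le_trans (Nat.le_succ M) hnM
      have : f k = (∏ j ∈ Finset.Ioc k M, (1 - a j)) * f M := by
        rw [hf]
        simp only
        rw [← Finset.prod_Ioc_consecutive (fun j => (1 - a j)) hk.2 hkn]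
      rw [this]
      have h1 := hprod_nonneg k M
      have h2 := hprod_le_one k M
      have h3 : 0 ≤ f M := hprod_nonneg M n
      have : (∏ j ∈ Finset.Ioc k M, (1 - a j)) * f M ≤ f M := by nlinarith
      exact mul_le_mul_of_nonneg_left this (hb k)
    calc (∑ k ∈ Finset.Ioc 0 M, b k * f k) ≤ ∑ k ∈ Finset.Ioc 0 M, b k * f M :=
          Finset.sum_le_sum hterm
      _ = C * f M := by rw [← Finset.sum_mul]
      _ < ε / 2 := by
          have h3 : 0 ≤ f M := hprod_nonneg M n
          have h4 : (C + 1) * (ε / (2 * (C + 1))) = ε / 2 := by field_simp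
          nlinarith
  -- tail bound
  have htail : (∑ k ∈ Finset.Ioc M (n - 1), b k * f k) ≤ ε / 2 := by
    have hterm : ∀ k ∈ Finset.Ioc M (n - 1), b k * f k ≤ ε / 2 * (f (k + 1) - f k) := by
      intro k hk
      rw [Finset.mem_Ioc] at hk
      have hkn : k < n := lt_of_le_of_lt hk.2 (Nat.sub_lt hn1 one_pos)
      have hbk := hsmall k (le_of_lt hk.1)
      have hfk : 0 ≤ f k := hprod_nonneg k n
      have hfk1 : 0 ≤ f (k + 1) := hprod_nonneg (k + 1) n
      have hr := hrec k hkn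
      -- f (k+1) - f k = a (k+1) * f (k+1) ≥ a (k+1) * f k
      have h1 : a (k + 1) * f k ≤ f (k + 1) - f k := by
        rw [hr]
        nlinarith [(ha (k + 1)).1, (ha (k + 1)).2,
          mul_nonneg (mul_nonneg (ha (k + 1)).1.le (ha (k + 1)).1.le) hfk1]
      calc b k * f k ≤ (ε / 2 * a (k + 1)) * f k :=
            mul_le_mul_of_nonneg_right (le_of_lt hbk) hfk
        _ = ε / 2 * (a (k + 1) * f k) := by ring
        _ ≤ ε / 2 * (f (k + 1) - f k) := by
            exact mul_le_mul_of_nonneg_left h1 (by linarith)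
    have htel : (∑ k ∈ Finset.Ioc M (n - 1), (f (k + 1) - f k)) = f n - f (M + 1) := by
      have : Finset.Ioc M (n - 1) = Finset.Ico (M + 1) n := by
        ext x
        rw [Finset.mem_Ioc, Finset.mem_Ico]
        omega
      rw [this, Finset.sum_Ico_eq_sub _ hnM, Finset.sum_range_sub, Finset.sum_range_sub]
      ring
    calc (∑ k ∈ Finset.Ioc M (n - 1), b k * f k)
        ≤ ∑ k ∈ Finset.Ioc M (n - 1), ε / 2 * (f (k + 1) - f k) := Finset.sum_le_sum hterm
      _ = ε / 2 * (f n - f (M + 1)) := by rw [← Finset.mul_sum, htel]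
      _ ≤ ε / 2 := by
          have h1 : f n = 1 := by rw [hf]; simp
          have h2 : 0 ≤ f (M + 1) := hprod_nonneg (M + 1) n
          nlinarith
  -- combine
  rw [Real.dist_eq, sub_zero]
  have hnonneg : 0 ≤ ∑ k ∈ Finset.Icc 1 (n - 1),
      b k * ∏ j ∈ Finset.Icc (k + 1) n, (1 - a j) :=
    Finset.sum_nonneg fun k _ => mul_nonneg (hb k)
      (Finset.prod_nonneg fun j _ => hfac_nonneg j)
  rw [abs_of_nonneg hnonneg, hsum]
  linarith
end

section
/- Let (a_n), (b_n), (g_n) be real sequences with 0 < a_n < 1 for all n, b_n ≥ 0 and g_n ≥ 0 for all n, b_{n-1}/a_n → 0 as n → ∞, ∑_{n=1}^∞ a_n = ∞, and g_{n+1} ≤ (1 - a_n) g_n + b_n for all n ≥ 1. Then g_n → 0 as n → ∞. -/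
open Filter

theorem g_tendsto_zero (a b g : ℕ → ℝ)
    (ha : ∀ n, 0 < a n ∧ a n < 1)
    (hb : ∀ n, 0 ≤ b n)
    (hg : ∀ n, 0 ≤ g n)
    (hba : Tendsto (fun n => b (n - 1) / a n) atTop (nhds 0))
    (hdiv : Tendsto (fun n => ∑ j ∈ Finset.Icc 1 n, a j) atTop atTop)
    (hrec : ∀ n ≥ 1, g (n + 1) ≤ (1 - a n) * g n + b n) :
    Tendsto g atTop (nhds 0) := by
  rw [Metric.tendsto_atTop]
  intro ε hε
  set c := ε / 3 with hc
  have hc0 : 0 < c := by positivity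
  rw [Metric.tendsto_atTop] at hba
  obtain ⟨N₀, hN₀⟩ := hba c hc0
  set N := max N₀ 1 with hNdef
  have hN1 : 1 ≤ N := le_max_right _ _
  have hbk : ∀ k ≥ N, b k ≤ c * a (k + 1) := by
    intro k hk
    have h1 : N₀ ≤ k + 1 := le_trans (le_trans (le_max_left _ _) hk) (Nat.le_succ k)
    have h2 := hN₀ (k + 1) h1
    rw [Real.dist_eq, sub_zero] at h2
    have hpos := (ha (k + 1)).1
    have hb' : b ((k + 1) - 1) / a (k + 1) < c := lt_of_abs_lt h2
    simp only [Nat.add_sub_cancel] at hb'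
    calc b k = b k / a (k + 1) * a (k + 1) := by field_simp
      _ ≤ c * a (k + 1) := mul_le_mul_of_nonneg_right hb'.le hpos.le
  -- main iterated bound
  have hbound : ∀ n, N ≤ n →
      g n ≤ (∏ j ∈ Finset.Ico N n, (1 - a j)) * g N + c + c * a n := by
    intro n hn
    induction n, hn using Nat.le_induction with
    | base =>
      simp only [Finset.Ico_self, Finset.prod_empty, one_mul]
      nlinarith [(ha N).1]
    | succ n hn ih =>
      have h1 := hrec n (le_trans hN1 hn)
      have h2 := hbk n hn
      have hP : 0 ≤ ∏ j ∈ Finset.Ico N n, (1 - a j) :=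
        Finset.prod_nonneg (fun j _ => by linarith [(ha j).2])
      have hprod : (∏ j ∈ Finset.Ico N (n + 1), (1 - a j))
          = (∏ j ∈ Finset.Ico N n, (1 - a j)) * (1 - a n) := by
        rw [Finset.prod_Ico_succ_top hn]
      rw [hprod]
      have h3 : (1 - a n) * g n
          ≤ (1 - a n) * ((∏ j ∈ Finset.Ico N n, (1 - a j)) * g N + c + c * a n) :=
        mul_le_mul_of_nonneg_left ih (by linarith [(ha n).2])
      nlinarith [(ha n).1, (ha n).2, sq_nonneg (a n)]
  -- divergence of partial sums starting at N
  have hIco1 : Tendsto (fun n => ∑ j ∈ Finset.Ico 1 n, a j) atTop atTop := by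
    rw [← tendsto_add_atTop_iff_nat 1]
    have : (fun n => ∑ j ∈ Finset.Ico 1 (n + 1), a j)
        = fun n => ∑ j ∈ Finset.Icc 1 n, a j := by
      funext n
      rw [Finset.Ico_add_one_right_eq_Icc]
    rw [this]
    exact hdiv
  have hS : Tendsto (fun n => ∑ j ∈ Finset.Ico N n, a j) atTop atTop := by
    apply tendsto_atTop_mono' _ _ (tendsto_atTop_add_const_right _
      (-(∑ j ∈ Finset.Ico 1 N, a j)) hIco1)
    filter_upwards [eventually_ge_atTop N] with n hn
    have := Finset.sum_Ico_consecutive (f := a) (m := 1) hN1 hn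
    linarith [this]
  -- product tends to 0
  have hP0 : Tendsto (fun n => (∏ j ∈ Finset.Ico N n, (1 - a j)) * g N) atTop (nhds 0) := by
    have h0 : Tendsto (fun n => ∏ j ∈ Finset.Ico N n, (1 - a j)) atTop (nhds 0) := by
      apply squeeze_zero
        (fun n => Finset.prod_nonneg (fun j _ => by linarith [(ha j).2]))
        (g := fun n => Real.exp (-(∑ j ∈ Finset.Ico N n, a j)))
      · intro n
        calc (∏ j ∈ Finset.Ico N n, (1 - a j))
            ≤ ∏ j ∈ Finset.Ico N n, Real.exp (-a j) :=
              Finset.prod_le_prod (fun j _ => by linarith [(ha j).2])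
                (fun j _ => by linarith [Real.add_one_le_exp (-a j)])
          _ = Real.exp (∑ j ∈ Finset.Ico N n, -a j) := (Real.exp_sum _ _).symm
          _ = Real.exp (-(∑ j ∈ Finset.Ico N n, a j)) := by rw [Finset.sum_neg_distrib]
      · exact Real.tendsto_exp_atBot.comp (tendsto_neg_atBot_iff.mpr hS)
    simpa using h0.mul_const (g N)
  rw [Metric.tendsto_atTop] at hP0
  obtain ⟨M, hM⟩ := hP0 c hc0
  refine ⟨max M N, fun n hn => ?_⟩
  have hnM : M ≤ n := le_trans (le_max_left _ _) hn
  have hnN : N ≤ n := le_trans (le_max_right _ _) hn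
  have h1 := hbound n hnN
  have h2 := hM n hnM
  rw [Real.dist_eq, sub_zero] at h2
  have h3 : (∏ j ∈ Finset.Ico N n, (1 - a j)) * g N < c := lt_of_abs_lt h2
  rw [Real.dist_eq, sub_zero, abs_of_nonneg (hg n)]
  have := (ha n).2
  have := (ha n).1
  nlinarith
end
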